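/- Let $(A, \bullet_{\alpha,\beta}, p_\alpha, q_\alpha)_{\alpha,\beta\in\Omega}$ be a BiHom-$\Omega$-associative algebra and let $p'_\alpha, q'_\alpha: A \to A$ be BiHom-$\Omega$-associative algebra morphisms such that any two of the families $p_\alpha, q_\alpha, p'_\alpha, q'_\alpha$ commute with each other. Define $x \bullet'_{\alpha,\beta} y := p'_\alpha(x) \bullet_{\alpha,\beta} q'_\beta(y)$. Then $(A, \bullet'_{\alpha,\beta}, p_\alpha\circ p'_\alpha, q_\alpha\circ q'_\alpha)_{\alpha,\beta\in\Omega}$ is a BiHom-$\Omega$-associative algebra. -/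
import Mathlib


/-- General Yau twist of a BiHom-Ω-associative algebra. -/
theorem stmt_1
    {K : Type*} [Field K] {Ω : Type*} [Semigroup Ω]
    {A : Type*} [AddCommGroup A] [Module K A]
    (mul : Ω → Ω → A →ₗ[K] A →ₗ[K] A)
    (p q p' q' : Ω → A →ₗ[K] A)
    -- (A, mul, p, q) is a BiHom-Ω-associative algebra
    (hp : ∀ (α β : Ω) (x y : A), p (α * β) (mul α β x y) = mul α β (p α x) (p β y))
    (hq : ∀ (α β : Ω) (x y : A), q (α * β) (mul α β x y) = mul α β (q α x) (q β y))
    (hpq : ∀ (α : Ω) (x : A), p α (q α x) = q α (p α x))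
    (hassoc : ∀ (α β γ : Ω) (x y z : A),
      mul α (β * γ) (p α x) (mul β γ y z) = mul (α * β) γ (mul α β x y) (q γ z))
    -- p', q' are BiHom-Ω-associative algebra morphisms
    (hp' : ∀ (α β : Ω) (x y : A), p' (α * β) (mul α β x y) = mul α β (p' α x) (p' β y))
    (hq' : ∀ (α β : Ω) (x y : A), q' (α * β) (mul α β x y) = mul α β (q' α x) (q' β y))
    -- any two of the four families commute with each other
    (hpp' : ∀ (α : Ω) (x : A), p α (p' α x) = p' α (p α x))
    (hpq' : ∀ (α : Ω) (x : A), p α (q' α x) = q' α (p α x))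
    (hqp' : ∀ (α : Ω) (x : A), q α (p' α x) = p' α (q α x))
    (hqq' : ∀ (α : Ω) (x : A), q α (q' α x) = q' α (q α x))
    (hp'q' : ∀ (α : Ω) (x : A), p' α (q' α x) = q' α (p' α x))
    -- the twisted multiplication
    (mul' : Ω → Ω → A → A → A)
    (hmul' : ∀ (α β : Ω) (x y : A), mul' α β x y = mul α β (p' α x) (q' β y)) :
    -- (A, mul', p ∘ p', q ∘ q') is a BiHom-Ω-associative algebra
    (∀ (α β : Ω) (x y : A),
      p (α * β) (p' (α * β) (mul' α β x y)) = mul' α β (p α (p' α x)) (p β (p' β y))) ∧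
    (∀ (α β : Ω) (x y : A),
      q (α * β) (q' (α * β) (mul' α β x y)) = mul' α β (q α (q' α x)) (q β (q' β y))) ∧
    (∀ (α : Ω) (x : A), p α (p' α (q α (q' α x))) = q α (q' α (p α (p' α x)))) ∧
    (∀ (α β γ : Ω) (x y z : A),
      mul' α (β * γ) (p α (p' α x)) (mul' β γ y z)
        = mul' (α * β) γ (mul' α β x y) (q γ (q' γ z))) := by
  refine ⟨?_, ?_, ?_, ?_⟩
  · intro α β x y
    rw [hmul', hmul', hp', hp, hpp', hp'q', hpq']
  · intro α β x y
    rw [hmul', hmul', hq', hq, ← hp'q', hqp', hqq', hqq']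
  · intro α x
    rw [hqq', hp'q', hpq', hpp', hpq, ← hqp', ← hqq', ← hpp']
  · intro α β γ x y z
    rw [hmul', hmul', hmul', hmul', hq', ← hpp', hassoc, hp', hp'q', hqq']
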